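/- For all n, m ∈ ℕ_{>0}, the complete bipartite graph K_{n,m} satisfies ffn(K_{n,m}) = min{n, m} + 1. -/

import Mathlib

open scoped Classical
noncomputable section

variable {V : Type*}

/-- The neighbourhood of a set of vertices: all vertices outside `S` adjacent to some
vertex of `S`. -/
def nbhd [Fintype V] (G : SimpleGraph V) (S : Finset V) : Finset V :=
  Finset.univ.filter fun v => v ∉ S ∧ ∃ u ∈ S, G.Adj u v

/-- The burning sets of a strategy `F` (where `F i` is the firefighter set at time `i`):
`B 0 = V` and `B (t+1) = (B t \ F (t+1)) ∪ N(B t \ F (t+1))`. -/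
def burn [Fintype V] (G : SimpleGraph V) (F : ℕ → Finset V) : ℕ → Finset V
  | 0 => Finset.univ
  | t + 1 => (burn G F t \ F (t + 1)) ∪ nbhd G (burn G F t \ F (t + 1))

/-- `F` is a `T`-winning `m`-strategy for `G`. -/
def WinningStrategy [Fintype V] (G : SimpleGraph V) (m T : ℕ) (F : ℕ → Finset V) : Prop :=
  (∀ i, (F i).card ≤ m) ∧ burn G F T = ∅

/-- The firefighter number of `G`: the least `m` admitting a winning `m`-strategy. -/
def ffn [Fintype V] (G : SimpleGraph V) : ℕ :=
  sInf {m | ∃ T F, WinningStrategy G m T F}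

namespace FFAux

@[simp] lemma mem_nbhd [Fintype V] {G : SimpleGraph V} {S : Finset V} {v : V} :
    v ∈ nbhd G S ↔ v ∉ S ∧ ∃ u ∈ S, G.Adj u v := by simp [nbhd]

variable {n m : ℕ}

def Lset (n m : ℕ) : Finset (Fin n ⊕ Fin m) := Finset.univ.image Sum.inl
def Rset (n m : ℕ) : Finset (Fin n ⊕ Fin m) := Finset.univ.image Sum.inr

@[simp] lemma mem_Lset {v : Fin n ⊕ Fin m} : v ∈ Lset n m ↔ v.isLeft := by
  cases v <;> simp [Lset]

@[simp] lemma mem_Rset {v : Fin n ⊕ Fin m} : v ∈ Rset n m ↔ v.isRight := by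
  cases v <;> simp [Rset]

lemma card_Lset : (Lset n m).card = n := by
  rw [Lset, Finset.card_image_of_injective _ Sum.inl_injective, Finset.card_univ,
    Fintype.card_fin]

lemma card_Rset : (Rset n m).card = m := by
  rw [Rset, Finset.card_image_of_injective _ Sum.inr_injective, Finset.card_univ,
    Fintype.card_fin]

/-- Upper bound: `n + 1` firefighters win on `K_{n,m}`. -/
lemma winning_left (n m : ℕ) (hn : 0 < n) (hm : 0 < m) :
    ∃ T F, WinningStrategy (completeBipartiteGraph (Fin n) (Fin m)) (n + 1) T F := by
  letI : DecidableEq (Fin n ⊕ Fin m) := fun a b => Classical.propDecidable (a = b)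
  set G := completeBipartiteGraph (Fin n) (Fin m) with hG
  set F : ℕ → Finset (Fin n ⊕ Fin m) :=
    fun i => insert (Sum.inr ⟨(i - 1) % m, Nat.mod_lt _ hm⟩) (Lset n m) with hF
  have key : ∀ t, t < m → burn G F t =
      Lset n m ∪ (Finset.univ.filter fun j : Fin m => t ≤ (j : ℕ)).image Sum.inr := by
    intro t
    induction t with
    | zero => intro _; ext v; cases v <;> simp [burn]
    | succ t ih =>
      intro ht
      have ht' : t < m := Nat.lt_of_succ_lt ht
      have hSmem : ∀ v, v ∈ burn G F t \ F (t + 1) ↔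
          ∃ j : Fin m, t + 1 ≤ (j : ℕ) ∧ Sum.inr j = v := by
        intro v
        rw [Finset.mem_sdiff, ih ht']
        cases v with
        | inl a => simp [hF]
        | inr b =>
          have htm : t % m = t := Nat.mod_eq_of_lt ht'
          simp only [Finset.mem_union, mem_Lset, Finset.mem_image, Finset.mem_filter,
            Finset.mem_univ, true_and, hF, Finset.mem_insert, Sum.isLeft_inr,
            Sum.inr.injEq, Fin.ext_iff, Nat.add_sub_cancel, htm]
          constructor
          · rintro ⟨h1 | ⟨j, hj, hjb⟩, h2⟩
            · exact absurd h1 (by simp)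
            · push_neg at h2
              exact ⟨j, by omega, hjb⟩
          · rintro ⟨j, hj, hjb⟩
            refine ⟨Or.inr ⟨j, by omega, hjb⟩, ?_⟩
            push_neg
            exact ⟨by omega, by simp⟩
      rw [burn]
      ext v
      rw [Finset.mem_union, mem_nbhd]
      cases v with
      | inl a =>
        constructor
        · intro _
          apply Finset.mem_union_left
          simp
        · intro _
          right
          refine ⟨fun h => ?_,
            ⟨Sum.inr ⟨t + 1, ht⟩, (hSmem _).mpr ⟨⟨t + 1, ht⟩, le_refl _, rfl⟩, by simp [hG]⟩⟩
          obtain ⟨j, -, hj⟩ := (hSmem _).mp h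
          cases hj
      | inr b =>
        constructor
        · rintro (h | ⟨-, u, hu, hadj⟩)
          · obtain ⟨j, hj, hjb⟩ := (hSmem _).mp h
            apply Finset.mem_union_right
            rw [Finset.mem_image]
            exact ⟨j, Finset.mem_filter.mpr ⟨Finset.mem_univ _, hj⟩, hjb⟩
          · obtain ⟨j, -, rfl⟩ := (hSmem u).mp hu
            exfalso
            simp [hG] at hadj
        · intro h
          rw [Finset.mem_union] at h
          rcases h with h | h
          · rw [mem_Lset] at h
            simp at h
          · rw [Finset.mem_image] at h
            obtain ⟨j, hjmem, hjb⟩ := h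
            rw [Finset.mem_filter] at hjmem
            exact Or.inl ((hSmem _).mpr ⟨j, hjmem.2, hjb⟩)
  refine ⟨m, F, fun i => ?_, ?_⟩
  · calc (F i).card ≤ (Lset n m).card + 1 := Finset.card_insert_le _ _
    _ = n + 1 := by rw [card_Lset]
  · obtain ⟨t, rfl⟩ : ∃ t, m = t + 1 := ⟨m - 1, by omega⟩
    have hB := key t (by omega)
    have hSempty : ∀ v, v ∉ burn G F t \ F (t + 1) := by
      intro v
      rw [Finset.mem_sdiff, hB]
      cases v with
      | inl a => simp [hF]
      | inr b =>
        have hb : (b : ℕ) < t + 1 := b.isLt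
        have htm : t % (t + 1) = t := Nat.mod_eq_of_lt (by omega)
        simp only [Finset.mem_union, mem_Lset, Finset.mem_image, Finset.mem_filter,
          Finset.mem_univ, true_and, hF, Finset.mem_insert, Sum.isLeft_inr,
          Sum.inr.injEq, Fin.ext_iff, Nat.add_sub_cancel, htm, not_and, not_not]
        rintro (h1 | ⟨j, hj, hjb⟩)
        · exact absurd h1 (by simp)
        · left
          omega
    rw [burn]
    ext v
    simp only [Finset.mem_union, mem_nbhd, Finset.notMem_empty, iff_false]
    rintro (h | ⟨-, u, hu, -⟩)
    · exact hSempty v h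
    · exact hSempty u hu

/-- Upper bound, mirrored: `m + 1` firefighters win on `K_{n,m}`. -/
lemma winning_right (n m : ℕ) (hn : 0 < n) (hm : 0 < m) :
    ∃ T F, WinningStrategy (completeBipartiteGraph (Fin n) (Fin m)) (m + 1) T F := by
  letI : DecidableEq (Fin n ⊕ Fin m) := fun a b => Classical.propDecidable (a = b)
  set G := completeBipartiteGraph (Fin n) (Fin m) with hG
  set F : ℕ → Finset (Fin n ⊕ Fin m) :=
    fun i => insert (Sum.inl ⟨(i - 1) % n, Nat.mod_lt _ hn⟩) (Rset n m) with hF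
  have key : ∀ t, t < n → burn G F t =
      Rset n m ∪ (Finset.univ.filter fun j : Fin n => t ≤ (j : ℕ)).image Sum.inl := by
    intro t
    induction t with
    | zero => intro _; ext v; cases v <;> simp [burn]
    | succ t ih =>
      intro ht
      have ht' : t < n := Nat.lt_of_succ_lt ht
      have hSmem : ∀ v, v ∈ burn G F t \ F (t + 1) ↔
          ∃ j : Fin n, t + 1 ≤ (j : ℕ) ∧ Sum.inl j = v := by
        intro v
        rw [Finset.mem_sdiff, ih ht']
        cases v with
        | inr a => simp [hF]
        | inl b =>
          have htm : t % n = t := Nat.mod_eq_of_lt ht'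
          simp only [Finset.mem_union, mem_Rset, Finset.mem_image, Finset.mem_filter,
            Finset.mem_univ, true_and, hF, Finset.mem_insert, Sum.isRight_inl,
            Sum.inl.injEq, Fin.ext_iff, Nat.add_sub_cancel, htm]
          constructor
          · rintro ⟨h1 | ⟨j, hj, hjb⟩, h2⟩
            · exact absurd h1 (by simp)
            · push_neg at h2
              exact ⟨j, by omega, hjb⟩
          · rintro ⟨j, hj, hjb⟩
            refine ⟨Or.inr ⟨j, by omega, hjb⟩, ?_⟩
            push_neg
            exact ⟨by omega, by simp⟩
      rw [burn]
      ext v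
      rw [Finset.mem_union, mem_nbhd]
      cases v with
      | inr a =>
        constructor
        · intro _
          apply Finset.mem_union_left
          simp
        · intro _
          right
          refine ⟨fun h => ?_,
            ⟨Sum.inl ⟨t + 1, ht⟩, (hSmem _).mpr ⟨⟨t + 1, ht⟩, le_refl _, rfl⟩, by simp [hG]⟩⟩
          obtain ⟨j, -, hj⟩ := (hSmem _).mp h
          cases hj
      | inl b =>
        constructor
        · rintro (h | ⟨-, u, hu, hadj⟩)
          · obtain ⟨j, hj, hjb⟩ := (hSmem _).mp h
            apply Finset.mem_union_right
            rw [Finset.mem_image]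
            exact ⟨j, Finset.mem_filter.mpr ⟨Finset.mem_univ _, hj⟩, hjb⟩
          · obtain ⟨j, -, rfl⟩ := (hSmem u).mp hu
            exfalso
            simp [hG] at hadj
        · intro h
          rw [Finset.mem_union] at h
          rcases h with h | h
          · rw [mem_Rset] at h
            simp at h
          · rw [Finset.mem_image] at h
            obtain ⟨j, hjmem, hjb⟩ := h
            rw [Finset.mem_filter] at hjmem
            exact Or.inl ((hSmem _).mpr ⟨j, hjmem.2, hjb⟩)
  refine ⟨n, F, fun i => ?_, ?_⟩
  · calc (F i).card ≤ (Rset n m).card + 1 := Finset.card_insert_le _ _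
    _ = m + 1 := by rw [card_Rset]
  · obtain ⟨t, rfl⟩ : ∃ t, n = t + 1 := ⟨n - 1, by omega⟩
    have hB := key t (by omega)
    have hSempty : ∀ v, v ∉ burn G F t \ F (t + 1) := by
      intro v
      rw [Finset.mem_sdiff, hB]
      cases v with
      | inr a => simp [hF]
      | inl b =>
        have hb : (b : ℕ) < t + 1 := b.isLt
        have htm : t % (t + 1) = t := Nat.mod_eq_of_lt (by omega)
        simp only [Finset.mem_union, mem_Rset, Finset.mem_image, Finset.mem_filter,
          Finset.mem_univ, true_and, hF, Finset.mem_insert, Sum.isRight_inl,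
          Sum.inl.injEq, Fin.ext_iff, Nat.add_sub_cancel, htm, not_and, not_not]
        rintro (h1 | ⟨j, hj, hjb⟩)
        · exact absurd h1 (by simp)
        · left
          omega
    rw [burn]
    ext v
    simp only [Finset.mem_union, mem_nbhd, Finset.notMem_empty, iff_false]
    rintro (h | ⟨-, u, hu, -⟩)
    · exact hSempty v h
    · exact hSempty u hu

/-- Lower bound invariant: with at most `min n m` firefighters per step, one whole side
always burns together with some vertex of the opposite side. -/
lemma lower_invariant (n m : ℕ) (hn : 0 < n) (hm : 0 < m)
    (F : ℕ → Finset (Fin n ⊕ Fin m)) (hF : ∀ i, (F i).card ≤ min n m) (t : ℕ) :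
    (Lset n m ⊆ burn (completeBipartiteGraph (Fin n) (Fin m)) F t ∧
      ∃ v ∈ burn (completeBipartiteGraph (Fin n) (Fin m)) F t, v.isRight) ∨
    (Rset n m ⊆ burn (completeBipartiteGraph (Fin n) (Fin m)) F t ∧
      ∃ v ∈ burn (completeBipartiteGraph (Fin n) (Fin m)) F t, v.isLeft) := by
  letI : DecidableEq (Fin n ⊕ Fin m) := fun a b => Classical.propDecidable (a = b)
  set G := completeBipartiteGraph (Fin n) (Fin m) with hG
  induction t with
  | zero =>
    left
    refine ⟨Finset.subset_univ _, ⟨Sum.inr ⟨0, hm⟩, Finset.mem_univ _, rfl⟩⟩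
  | succ t ih =>
    set B := burn G F t with hB
    set S := B \ F (t + 1) with hS
    have hcard : min n m + 1 ≤ B.card := by
      rcases ih with ⟨hsub, v, hv, hvr⟩ | ⟨hsub, v, hv, hvl⟩
      · have hvL : v ∉ Lset n m := by
          simp only [mem_Lset]
          cases v with
          | inl a => simp at hvr
          | inr b => simp
        have : insert v (Lset n m) ⊆ B := Finset.insert_subset hv hsub
        have := Finset.card_le_card this
        rw [Finset.card_insert_of_notMem hvL, card_Lset] at this
        omega
      · have hvR : v ∉ Rset n m := by
          simp only [mem_Rset]
          cases v with
          | inl a => simp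
          | inr b => simp at hvl
        have : insert v (Rset n m) ⊆ B := Finset.insert_subset hv hsub
        have := Finset.card_le_card this
        rw [Finset.card_insert_of_notMem hvR, card_Rset] at this
        omega
    have hSne : S.Nonempty := by
      rw [Finset.nonempty_iff_ne_empty]
      intro h
      have hsub := Finset.sdiff_eq_empty_iff_subset.mp h
      have := Finset.card_le_card hsub
      have := hF (t + 1)
      omega
    obtain ⟨s, hs⟩ := hSne
    have hBsucc : burn G F (t + 1) = S ∪ nbhd G S := by rw [burn]
    by_cases hL : ∃ a : Fin n, Sum.inl a ∈ S
    · obtain ⟨a, ha⟩ := hL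
      right
      constructor
      · intro v hv
        rw [hBsucc, Finset.mem_union]
        by_cases hvS : v ∈ S
        · exact Or.inl hvS
        · refine Or.inr ?_
          rw [mem_nbhd]
          refine ⟨hvS, Sum.inl a, ha, ?_⟩
          obtain ⟨b, rfl⟩ : ∃ b : Fin m, v = Sum.inr b := by
            rw [mem_Rset] at hv
            cases v with
            | inl x => simp at hv
            | inr b => exact ⟨b, rfl⟩
          simp [hG]
      · exact ⟨Sum.inl a, by rw [hBsucc]; exact Finset.mem_union_left _ ha, rfl⟩
    · push_neg at hL
      obtain ⟨b, rfl⟩ : ∃ b : Fin m, s = Sum.inr b := by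
        cases s with
        | inl a => exact absurd hs (hL a)
        | inr b => exact ⟨b, rfl⟩
      left
      constructor
      · intro v hv
        rw [hBsucc, Finset.mem_union]
        obtain ⟨a, rfl⟩ : ∃ a : Fin n, v = Sum.inl a := by
          rw [mem_Lset] at hv
          cases v with
          | inl a => exact ⟨a, rfl⟩
          | inr x => simp at hv
        refine Or.inr ?_
        rw [mem_nbhd]
        exact ⟨hL a, Sum.inr b, hs, by simp [hG]⟩
      · exact ⟨Sum.inr b, by rw [hBsucc]; exact Finset.mem_union_left _ hs, rfl⟩

end FFAux

/-- The firefighter number of the complete bipartite graph `K_{n,m}` is `min n m + 1`. -/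
theorem ffn_completeBipartiteGraph (n m : ℕ) (hn : 0 < n) (hm : 0 < m) :
    ffn (completeBipartiteGraph (Fin n) (Fin m)) = min n m + 1 := by
  classical
  have hmem : min n m + 1 ∈
      {k | ∃ T F, WinningStrategy (completeBipartiteGraph (Fin n) (Fin m)) k T F} := by
    rcases le_total n m with h | h
    · rw [min_eq_left h]
      exact FFAux.winning_left n m hn hm
    · rw [min_eq_right h]
      exact FFAux.winning_right n m hn hm
  have hlb : ∀ k ∈ {k | ∃ T F,
      WinningStrategy (completeBipartiteGraph (Fin n) (Fin m)) k T F}, min n m + 1 ≤ k := by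
    rintro k ⟨T, F, hcard, hempty⟩
    by_contra hlt
    push_neg at hlt
    have hF : ∀ i, (F i).card ≤ min n m := fun i => le_trans (hcard i) (by omega)
    have := FFAux.lower_invariant n m hn hm F hF T
    rcases this with ⟨-, v, hv, -⟩ | ⟨-, v, hv, -⟩ <;>
      (rw [hempty] at hv; exact Finset.notMem_empty v hv)
  exact le_antisymm (Nat.sInf_le hmem) (le_csInf ⟨_, hmem⟩ hlb)
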